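/- Let φ be a conjunction of literals over variables x_1,...,x_n and D an α-log-Lipschitz distribution on {0,1}^n. If Pr_{x∼D}[x ⊨ φ] < (1+α)^{-d}, then φ contains at least d literals (over at least d distinct variables). -/

import Mathlib

open Finset

/-- Probability of an event under a weight function `D` on `ι → Bool`. -/
noncomputable def pr {ι : Type*} [Fintype ι] [DecidableEq ι] (D : (ι → Bool) → ℝ)
    (P : (ι → Bool) → Prop) : ℝ := by
  classical exact ∑ x, if P x then D x else 0

/-- `D` is a probability distribution with full support. -/
def IsDistribution {ι : Type*} [Fintype ι] [DecidableEq ι] (D : (ι → Bool) → ℝ) : Prop :=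
  (∀ x, 0 < D x) ∧ ∑ x, D x = 1

/-- `D` is `α`-log-Lipschitz: points at Hamming distance 1 have log-probabilities
within `log α`. -/
def LogLipschitz {ι : Type*} [Fintype ι] [DecidableEq ι] (α : ℝ) (D : (ι → Bool) → ℝ) : Prop :=
  ∀ x x' : ι → Bool, hammingDist x x' = 1 →
    |Real.log (D x) - Real.log (D x')| ≤ Real.log α

/-- A conjunction of literals over `{0,1}ⁿ`: `φ i = some b` means the literal
requiring `x i = b` occurs; each variable appears at most once. -/
def SatConj {n : ℕ} (φ : Fin n → Option Bool) (x : Fin n → Bool) : Prop :=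
  ∀ i b, φ i = some b → x i = b

/-- Number of literals of a conjunction. -/
def numLits {n : ℕ} (φ : Fin n → Option Bool) : ℕ :=
  (Finset.univ.filter (fun i => (φ i).isSome)).card

private lemma pr_eq_sum_filter {ι : Type*} [Fintype ι] [DecidableEq ι]
    (D : (ι → Bool) → ℝ) (P : (ι → Bool) → Prop) [DecidablePred P] :
    pr D P = ∑ x ∈ Finset.univ.filter P, D x := by
  rw [sum_filter, pr]
  exact Finset.sum_congr rfl fun x _ => by by_cases h : P x <;> simp [h]

private lemma lip_mul {n : ℕ} {α : ℝ} (hα : 1 ≤ α) {D : (Fin n → Bool) → ℝ}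
    (hpos : ∀ x, 0 < D x) (hL : LogLipschitz α D)
    {x y : Fin n → Bool} (h : hammingDist x y = 1) : D x ≤ α * D y := by
  have hl := (abs_le.1 (hL x y h)).2
  have hα0 : 0 < α := by linarith
  have hlog : Real.log (D x) ≤ Real.log (α * D y) := by
    rw [Real.log_mul hα0.ne' (hpos y).ne']
    linarith
  have := Real.exp_le_exp.2 hlog
  rwa [Real.exp_log (hpos x), Real.exp_log (mul_pos hα0 (hpos y))] at this

private lemma key {n : ℕ} {α : ℝ} (hα : 1 ≤ α) {D : (Fin n → Bool) → ℝ}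
    (hD : IsDistribution D) (hL : LogLipschitz α D) :
    ∀ k (φ : Fin n → Option Bool), numLits φ = k →
      ((1 + α) ^ k)⁻¹ ≤ pr D (SatConj φ) := by
  classical
  have hc : (0:ℝ) < 1 + α := by linarith
  intro k
  induction k with
  | zero =>
    intro φ hk
    have hall : ∀ i, φ i = none := by
      intro i
      by_contra hi
      have hmem : i ∈ Finset.univ.filter (fun i => (φ i).isSome) := by
        simp [Option.isSome_iff_ne_none, hi]
      have := Finset.card_pos.2 ⟨i, hmem⟩
      simp only [numLits] at hk
      omega
    have hsat : ∀ x, SatConj φ x := by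
      intro x i b hb
      rw [hall i] at hb
      exact absurd hb (by simp)
    have : pr D (SatConj φ) = 1 := by
      rw [pr]
      simpa [hsat] using hD.2
    simp [this]
  | succ k ih =>
    intro φ hk
    obtain ⟨i, hi⟩ : ∃ i, (φ i).isSome := by
      by_contra hcon
      push_neg at hcon
      have : (Finset.univ.filter (fun i => (φ i).isSome)) = ∅ := by
        apply Finset.filter_false_of_mem
        intro j _
        simpa using hcon j
      simp only [numLits, this, Finset.card_empty] at hk
      omega
    obtain ⟨b, hb⟩ := Option.isSome_iff_exists.1 hi
    set φ' := Function.update φ i none with hφ'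
    have hlits : numLits φ' = k := by
      have hfe : Finset.univ.filter (fun j => (φ' j).isSome) =
          (Finset.univ.filter (fun j => (φ j).isSome)).erase i := by
        ext j
        by_cases hj : j = i
        · subst hj
          simp [hφ', Function.update_self]
        · simp [hφ', Function.update_of_ne hj, hj]
      have hmem : i ∈ Finset.univ.filter (fun j => (φ j).isSome) := by simp [hi]
      simp only [numLits, hfe, Finset.card_erase_of_mem hmem]
      simp only [numLits] at hk
      omega
    have hsat : ∀ x, SatConj φ x ↔ SatConj φ' x ∧ x i = b := by
      intro x
      constructor
      · intro hx
        refine ⟨?_, hx i b hb⟩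
        intro j c hj
        by_cases hji : j = i
        · subst hji; simp [hφ', Function.update_self] at hj
        · exact hx j c (by simpa [hφ', Function.update_of_ne hji] using hj)
      · rintro ⟨hx, hxi⟩ j c hj
        by_cases hji : j = i
        · subst hji
          rw [hb] at hj
          injection hj with hcc
          rw [← hcc]; exact hxi
        · exact hx j c (by simpa [hφ', Function.update_of_ne hji] using hj)
    -- filtered-sum names
    set A : Finset (Fin n → Bool) := Finset.univ.filter (fun x => SatConj φ x) with hA
    set B : Finset (Fin n → Bool) := Finset.univ.filter (fun x => SatConj φ' x) with hB
    have hprA : pr D (SatConj φ) = ∑ x ∈ A, D x := pr_eq_sum_filter D _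
    have hprB : pr D (SatConj φ') = ∑ x ∈ B, D x := pr_eq_sum_filter D _
    -- split B
    have hsplit : ∑ x ∈ B, D x =
        ∑ x ∈ B.filter (fun x => x i = b), D x +
        ∑ x ∈ B.filter (fun x => ¬ x i = b), D x :=
      (Finset.sum_filter_add_sum_filter_not B _ D).symm
    have hB1 : B.filter (fun x => x i = b) = A := by
      ext x
      simp [hA, hB, hsat x, and_comm]
    -- the flipped part
    have hB2 : ∑ x ∈ B.filter (fun x => ¬ x i = b), D x ≤ α * ∑ x ∈ A, D x := by
      have hstep : ∀ x ∈ B.filter (fun x => ¬ x i = b),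
          D x ≤ α * D (Function.update x i b) := by
        intro x hx
        simp only [Finset.mem_filter] at hx
        apply lip_mul hα hD.1 hL
        have hfil : (Finset.univ.filter fun j => x j ≠ Function.update x i b j) = {i} := by
          ext j
          by_cases hj : j = i
          · subst hj
            simp [Function.update_self, hx.2]
          · simp [Function.update_of_ne hj, hj]
        simp only [hammingDist, hfil, Finset.card_singleton]
      calc ∑ x ∈ B.filter (fun x => ¬ x i = b), D x
          ≤ ∑ x ∈ B.filter (fun x => ¬ x i = b), α * D (Function.update x i b) :=
            Finset.sum_le_sum hstep
        _ = α * ∑ x ∈ B.filter (fun x => ¬ x i = b), D (Function.update x i b) := by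
            rw [Finset.mul_sum]
        _ = α * ∑ y ∈ (B.filter (fun x => ¬ x i = b)).image
              (fun x => Function.update x i b), D y := by
            rw [Finset.sum_image]
            intro x hx y hy hxy
            simp only [Finset.mem_coe, Finset.mem_filter] at hx hy
            funext j
            by_cases hj : j = i
            · subst hj
              have hx2 := hx.2
              have hy2 := hy.2
              cases hxb : x j <;> cases hyb : y j <;> cases b <;> simp_all
            · have := congrFun hxy j
              simpa [Function.update_of_ne hj] using this
        _ ≤ α * ∑ y ∈ A, D y := by
            apply mul_le_mul_of_nonneg_left _ (by linarith)
            apply Finset.sum_le_sum_of_subset_of_nonneg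
            · intro y hy
              simp only [Finset.mem_image, Finset.mem_filter] at hy
              obtain ⟨x, ⟨hxB, _⟩, rfl⟩ := hy
              have hx' : SatConj φ' x := by simpa [hB] using hxB
              simp only [hA, Finset.mem_filter, Finset.mem_univ, true_and]
              rw [hsat]
              refine ⟨?_, Function.update_self i b x⟩
              intro j c hj
              have hji : j ≠ i := by
                rintro rfl
                simp [hφ', Function.update_self] at hj
              rw [Function.update_of_ne hji]
              exact hx' j c hj
            · intro y _ _
              exact (hD.1 y).le
    have hBA : ∑ x ∈ B, D x ≤ (1 + α) * ∑ x ∈ A, D x := by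
      rw [hsplit, hB1]
      have hAnn : (0:ℝ) ≤ ∑ x ∈ A, D x :=
        Finset.sum_nonneg fun x _ => (hD.1 x).le
      nlinarith [hB2]
    have hih := ih φ' hlits
    rw [hprB] at hih
    rw [hprA]
    have h2 : ((1 + α) ^ k)⁻¹ ≤ (1 + α) * ∑ x ∈ A, D x := le_trans hih hBA
    have h3 : ((1 + α) ^ k)⁻¹ * (1 + α)⁻¹ ≤ ((1 + α) * ∑ x ∈ A, D x) * (1 + α)⁻¹ :=
      mul_le_mul_of_nonneg_right h2 (by positivity)
    rw [mul_comm (1 + α) (∑ x ∈ A, D x), mul_assoc, mul_inv_cancel₀ hc.ne', mul_one] at h3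
    rw [pow_succ, mul_inv]
    exact h3

theorem conjunction_small_mass_implies_long {n : ℕ} (α : ℝ) (hα : 1 ≤ α)
    (D : (Fin n → Bool) → ℝ) (hD : IsDistribution D) (hL : LogLipschitz α D)
    (φ : Fin n → Option Bool) (d : ℕ)
    (h : pr D (SatConj φ) < ((1 + α) ^ d)⁻¹) :
    d ≤ numLits φ := by
  have hkey := key hα hD hL (numLits φ) φ rfl
  have hlt : ((1 + α) ^ numLits φ)⁻¹ < ((1 + α) ^ d)⁻¹ := lt_of_le_of_lt hkey h
  have hb : (1:ℝ) < 1 + α := by linarith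
  have hpow : (1 + α) ^ d < (1 + α) ^ numLits φ := by
    have hp : (0:ℝ) < (1 + α) ^ numLits φ := by positivity
    have hq : (0:ℝ) < (1 + α) ^ d := by positivity
    exact (inv_lt_inv₀ hp hq).1 hlt
  exact le_of_lt ((pow_lt_pow_iff_right₀ hb).1 hpow)
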